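/- Let Λ be a strongly connected finite k-graph with Perron–Frobenius measure M on Λ^∞, and let S_λ be the operators of the associated Λ-semibranching representation, so S_λ f^{m,v} = ρ(Λ)^{d(λ)/2}·Σ_{μ∈D_v} c^{m,v}_μ·Θ_{λμ} when s(λ) = v. Then for λ ∈ C_{j,v} and λ' ∈ C_{j,v'} with d(λ) = d(λ') = (j,…,j): ∫ S_λ f^{m,v}·conj(S_{λ'} f^{m',v'}) dM = δ_{λ,λ'}·δ_{m,m'}. Moreover, for λ ∈ C_{j,v} and λ' ∈ C_{i,v'} with j > i ≥ 0, the integral ∫ S_λ f^{m,v}·conj(S_{λ'} f^{m',v'}) dM = 0. -/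

import Mathlib

open MeasureTheory

/-- A (small, combinatorial) model of a higher-rank graph (`k`-graph): a category-like
structure with vertices `V`, paths (morphisms) `P`, range and source maps, a degree
functor `d : P → ℕᵏ`, identities `vert`, partially defined composition, and the unique
factorization property. -/
structure KGraph (k : ℕ) where
  V : Type
  P : Type
  r : P → V
  s : P → V
  d : P → (Fin k → ℕ)
  vert : V → P
  comp : (l m : P) → s l = r m → P
  r_vert : ∀ v, r (vert v) = v
  s_vert : ∀ v, s (vert v) = v
  d_vert : ∀ v, d (vert v) = 0
  vert_inj : Function.Injective vert
  r_comp : ∀ l m h, r (comp l m h) = r l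
  s_comp : ∀ l m h, s (comp l m h) = s m
  d_comp : ∀ l m h, d (comp l m h) = d l + d m
  comp_vert_left : ∀ l, comp (vert (r l)) l (s_vert (r l)) = l
  comp_vert_right : ∀ l, comp l (vert (s l)) ((r_vert (s l)).symm) = l
  comp_assoc : ∀ l m n (h1 : s l = r m) (h2 : s m = r n),
    comp (comp l m h1) n ((s_comp l m h1).trans h2) =
      comp l (comp m n h2) (h1.trans (r_comp m n h2).symm)
  factor : ∀ (l : P) (m n : Fin k → ℕ), d l = m + n →
    ∃! q : P × P, ∃ h : s q.1 = r q.2, comp q.1 q.2 h = l ∧ d q.1 = m ∧ d q.2 = n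

namespace KGraph

variable {k : ℕ}

/-- `Λ` is finite: each `Λⁿ` is a finite set. -/
def IsRowFinite (G : KGraph k) : Prop := ∀ n : Fin k → ℕ, {l : G.P | G.d l = n}.Finite

/-- `Λ` has no sources: `vΛⁿ ≠ ∅` for every vertex `v` and degree `n`. -/
def NoSources (G : KGraph k) : Prop :=
  ∀ (v : G.V) (n : Fin k → ℕ), ∃ l : G.P, G.r l = v ∧ G.d l = n

/-- `Λ` is strongly connected: `vΛw ≠ ∅` for all vertices `v, w`. -/
def StronglyConnected (G : KGraph k) : Prop :=
  ∀ v w : G.V, ∃ l : G.P, G.r l = v ∧ G.s l = w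

/-- The `i`-th vertex adjacency matrix: `Aᵢ(v,w)` is the number of paths of degree
`eᵢ` from `w` to `v`. -/
noncomputable def vertexMatrix (G : KGraph k) (i : Fin k) (v w : G.V) : ℕ :=
  Nat.card {l : G.P // G.d l = Pi.single i 1 ∧ G.r l = v ∧ G.s l = w}

/-- An infinite path in the `k`-graph `G`: a degree-preserving, composition-compatible
assignment of a path `x(p,q)` to every pair `p ≤ q` in `ℕᵏ` (a functor `Ω_k → Λ`). -/
structure InfPath (G : KGraph k) where
  seg : (p q : Fin k → ℕ) → p ≤ q → G.P
  d_seg : ∀ p q h, G.d (seg p q h) = fun i => q i - p i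
  s_r_seg : ∀ p q m (h1 : p ≤ q) (h2 : q ≤ m), G.s (seg p q h1) = G.r (seg q m h2)
  comp_seg : ∀ p q m (h1 : p ≤ q) (h2 : q ≤ m),
    G.comp (seg p q h1) (seg q m h2) (s_r_seg p q m h1 h2) = seg p m (h1.trans h2)

/-- The cylinder set `Z(λ) = {x ∈ Λ^∞ : x(0, d(λ)) = λ}`. -/
def Z (G : KGraph k) (l : G.P) : Set G.InfPath :=
  {x | x.seg 0 (G.d l) (fun i => Nat.zero_le _) = l}

end KGraph


/-- The weight `ρ(Λ)^{(−1,…,−1)}·x^Λ_{s(λ)}` appearing in the inner product on `ℂ^{D_v}`. -/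
noncomputable def KGraph.wt {k : ℕ} (G : KGraph k) (ρ : Fin k → ℝ) (xL : G.V → ℝ)
    (l : G.P) : ℂ :=
  (((∏ i, ρ i)⁻¹ * xL (G.s l) : ℝ) : ℂ)

/-- `d_v = |D_v|`, the number of paths of degree `(1,…,1)` with range `v`. -/
noncomputable def KGraph.dv {k : ℕ} (G : KGraph k) (v : G.V) : ℕ :=
  Nat.card {l : G.P // G.d l = (fun _ => 1) ∧ G.r l = v}

/-- The shifted wavelet `S_λ f = ρ(Λ)^{d(λ)/2} Σ_{μ ∈ s(λ)Λ} c_μ Θ_{λμ}` attached to a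
path `λ` and a coefficient vector `c` (supported on `D_{s(λ)}`). -/
noncomputable def KGraph.swavelet {k : ℕ} (G : KGraph k) (ρ : Fin k → ℝ) (l : G.P)
    (c : G.P → ℂ) : G.InfPath → ℂ :=
  fun x => ((Real.sqrt (∏ i, ρ i ^ (G.d l i)) : ℝ) : ℂ) *
    ∑ᶠ m : {m : G.P // G.s l = G.r m},
      c m.1 * Set.indicator (G.Z (G.comp l m.1 m.2)) (fun _ => (1 : ℂ)) x

namespace KGraph

variable {k : ℕ} {G : KGraph k}

lemma seg_congr (x : G.InfPath) {p q p' q' : Fin k → ℕ} (hp : p = p') (hq : q = q')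
    (h : p ≤ q) (h' : p' ≤ q') : x.seg p q h = x.seg p' q' h' := by
  subst hp; subst hq; rfl

lemma comp_congr {a a' b b' : G.P} (ha : a = a') (hb : b = b')
    (hs : G.s a = G.r b) (hs' : G.s a' = G.r b') :
    G.comp a b hs = G.comp a' b' hs' := by
  subst ha; subst hb; rfl

lemma factor_unique {l : G.P} {m n : Fin k → ℕ} (hmn : G.d l = m + n)
    {a b a' b' : G.P} (hs : G.s a = G.r b) (hs' : G.s a' = G.r b')
    (hc : G.comp a b hs = l) (hc' : G.comp a' b' hs' = l)
    (hda : G.d a = m) (hdb : G.d b = n) (hda' : G.d a' = m) (hdb' : G.d b' = n) :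
    a = a' ∧ b = b' := by
  obtain ⟨q, -, hu⟩ := G.factor l m n hmn
  have h1 := hu (a, b) ⟨hs, hc, hda, hdb⟩
  have h2 := hu (a', b') ⟨hs', hc', hda', hdb'⟩
  have h3 : (a, b) = (a', b') := h1.trans h2.symm
  exact ⟨congrArg Prod.fst h3, congrArg Prod.snd h3⟩

/-- If `e = ab` then `Z(e) ⊆ Z(a)`. -/
lemma Z_subset {a b e : G.P} (hs : G.s a = G.r b) (hc : G.comp a b hs = e) :
    G.Z e ⊆ G.Z a := by
  intro x hx
  have hde : G.d e = G.d a + G.d b := by rw [← hc, G.d_comp]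
  have hle : G.d a ≤ G.d e := fun i => by rw [hde]; exact Nat.le_add_right _ _
  have h0 : (0 : Fin k → ℕ) ≤ G.d a := fun i => Nat.zero_le _
  have hcs := x.comp_seg 0 (G.d a) (G.d e) h0 hle
  have hx' : x.seg 0 (G.d e) (h0.trans hle) = e := hx
  have key := factor_unique (G := G) hde (x.s_r_seg 0 (G.d a) (G.d e) h0 hle) hs
    (hcs.trans hx') hc
    (by rw [x.d_seg]; funext i; simp)
    (by rw [x.d_seg]; funext i; simp [hde])
    rfl rfl
  exact key.1

/-- Two cylinders of equal-degree paths meet only if the paths agree. -/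
lemma eq_of_mem_Z {e e' : G.P} {x : G.InfPath} (h : x ∈ G.Z e) (h' : x ∈ G.Z e')
    (hd : G.d e = G.d e') : e = e' := by
  have h1 : x.seg 0 (G.d e) (fun i => Nat.zero_le _) = e := h
  have h2 : x.seg 0 (G.d e') (fun i => Nat.zero_le _) = e' := h'
  rw [← h1, ← h2]
  exact seg_congr x rfl hd _ _

/-- The cylinder of the composite `lμ`, or `∅` if the composite is undefined. -/
noncomputable def cyl (G : KGraph k) [DecidableEq G.V] (l μ : G.P) : Set G.InfPath :=
  if h : G.s l = G.r μ then G.Z (G.comp l μ h) else ∅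

end KGraph

namespace KGraph

variable {k : ℕ} {G : KGraph k}

lemma cyl_measurable [DecidableEq G.V] [MeasurableSpace G.InfPath]
    (hZmeas : ∀ l : G.P, MeasurableSet (G.Z l)) (l μ : G.P) :
    MeasurableSet (G.cyl l μ) := by
  unfold cyl; split
  · exact hZmeas _
  · exact MeasurableSet.empty

lemma swavelet_sum [DecidableEq G.V] [DecidableEq G.P] (hfin : G.IsRowFinite)
    (ρ : Fin k → ℝ) (l : G.P) (a : G.P → ℂ)
    (ha : ∀ μ, a μ ≠ 0 → G.d μ = (fun _ => 1) ∧ G.r μ = G.s l) (x : G.InfPath) :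
    G.swavelet ρ l a x = ((Real.sqrt (∏ i, ρ i ^ (G.d l i)) : ℝ) : ℂ) *
      ∑ μ ∈ (hfin (fun _ => 1)).toFinset,
        a μ * Set.indicator (G.cyl l μ) (fun _ => (1 : ℂ)) x := by
  unfold swavelet
  congr 1
  have e1 : ∀ m : {m : G.P // G.s l = G.r m},
      a m.1 * Set.indicator (G.Z (G.comp l m.1 m.2)) (fun _ => (1 : ℂ)) x
        = a m.1 * Set.indicator (G.cyl l m.1) (fun _ => (1 : ℂ)) x := by
    intro m
    rw [cyl, dif_pos m.2]
  rw [finsum_congr e1]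
  rw [finsum_subtype_eq_finsum_cond (f := fun μ => a μ * Set.indicator (G.cyl l μ) (fun _ => (1 : ℂ)) x) (fun m => G.s l = G.r m)]
  rw [finsum_cond_eq_sum_of_cond_iff (f := fun μ => a μ * Set.indicator (G.cyl l μ) (fun _ => (1 : ℂ)) x) (p := fun μ => G.s l = G.r μ)
      (t := ((hfin (fun _ => 1)).toFinset.filter (fun μ => G.s l = G.r μ)))]
  · refine Finset.sum_subset (Finset.filter_subset _ _) ?_
    intro μ hμ hnot
    rcases eq_or_ne (a μ) 0 with h | h
    · rw [h, zero_mul]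
    · exact absurd (Finset.mem_filter.2 ⟨hμ, ((ha μ h).2).symm⟩) hnot
  · intro μ hμ
    have haμ : a μ ≠ 0 := by
      intro h0; rw [h0, zero_mul] at hμ; exact hμ rfl
    have := ha μ haμ
    simp only [Finset.mem_filter, Set.Finite.mem_toFinset, Set.mem_setOf_eq]
    exact ⟨fun h => ⟨this.1, h⟩, fun h => h.2⟩

open MeasureTheory in
lemma conj_indicator (S : Set G.InfPath) (x : G.InfPath) :
    (starRingEnd ℂ) (Set.indicator S (fun _ => (1 : ℂ)) x)
      = Set.indicator S (fun _ => (1 : ℂ)) x := by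
  by_cases h : x ∈ S <;> simp [h]

open MeasureTheory in
lemma integral_pair [DecidableEq G.V] [DecidableEq G.P] [MeasurableSpace G.InfPath]
    (M : Measure G.InfPath) [IsProbabilityMeasure M]
    (hZmeas : ∀ l : G.P, MeasurableSet (G.Z l))
    (E : Finset G.P) (A A' : ℝ) (a b : G.P → ℂ) (l l' : G.P) :
    ∫ x, ((A : ℂ) * ∑ μ ∈ E, a μ * Set.indicator (G.cyl l μ) (fun _ => (1 : ℂ)) x) *
        (starRingEnd ℂ) ((A' : ℂ) * ∑ μ ∈ E, b μ * Set.indicator (G.cyl l' μ) (fun _ => (1 : ℂ)) x) ∂M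
      = ∑ μ ∈ E, ∑ μ' ∈ E, ((A : ℂ) * (A' : ℂ) * a μ * (starRingEnd ℂ) (b μ')) *
          (((M (G.cyl l μ ∩ G.cyl l' μ')).toReal : ℝ) : ℂ) := by
  have key : ∀ x : G.InfPath,
      ((A : ℂ) * ∑ μ ∈ E, a μ * Set.indicator (G.cyl l μ) (fun _ => (1 : ℂ)) x) *
        (starRingEnd ℂ) ((A' : ℂ) * ∑ μ ∈ E, b μ * Set.indicator (G.cyl l' μ) (fun _ => (1 : ℂ)) x)
      = ∑ μ ∈ E, ∑ μ' ∈ E, ((A : ℂ) * (A' : ℂ) * a μ * (starRingEnd ℂ) (b μ')) *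
          Set.indicator (G.cyl l μ ∩ G.cyl l' μ') (fun _ => (1 : ℂ)) x := by
    intro x
    rw [map_mul, map_sum, Complex.conj_ofReal]
    rw [mul_mul_mul_comm, Finset.sum_mul_sum]
    rw [Finset.mul_sum]
    refine Finset.sum_congr rfl fun μ _ => ?_
    rw [Finset.mul_sum]
    refine Finset.sum_congr rfl fun μ' _ => ?_
    rw [map_mul, conj_indicator]
    have : Set.indicator (G.cyl l μ ∩ G.cyl l' μ') (fun _ => (1 : ℂ)) x
        = Set.indicator (G.cyl l μ) (fun _ => (1 : ℂ)) x *
          Set.indicator (G.cyl l' μ') (fun _ => (1 : ℂ)) x := by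
      rw [← Set.inter_indicator_mul]; simp
    rw [this]; ring
  rw [MeasureTheory.integral_congr_ae (Filter.Eventually.of_forall key)]
  rw [MeasureTheory.integral_finset_sum]
  · refine Finset.sum_congr rfl fun μ _ => ?_
    rw [MeasureTheory.integral_finset_sum]
    · refine Finset.sum_congr rfl fun μ' _ => ?_
      rw [MeasureTheory.integral_const_mul,
        MeasureTheory.integral_indicator_const _ ((cyl_measurable hZmeas l μ).inter (cyl_measurable hZmeas l' μ'))]
      simp [Complex.real_smul, Measure.real]
    · intro μ' _
      exact (((integrable_indicator_iff ((cyl_measurable hZmeas l μ).inter (cyl_measurable hZmeas l' μ'))).2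
        (integrableOn_const (measure_lt_top M _).ne))).const_mul _
  · intro μ _
    refine integrable_finset_sum _ fun μ' _ => ?_
    exact (((integrable_indicator_iff ((cyl_measurable hZmeas l μ).inter (cyl_measurable hZmeas l' μ'))).2
      (integrableOn_const (measure_lt_top M _).ne))).const_mul _

end KGraph


/-- Orthonormality of the shifted `k`-graph wavelets `S_λ f^{m,v}` (with
`S_λ f^{m,v} = ρ(Λ)^{d(λ)/2} Σ_{μ∈D_v} c^{m,v}_μ Θ_{λμ}` for `s(λ) = v`):
for `λ ∈ C_{j,v}`, `λ' ∈ C_{j,v'}` of equal degree `(j,…,j)`,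
`∫ S_λ f^{m,v} conj(S_{λ'} f^{m',v'}) dM = δ_{λ,λ'} δ_{m,m'}`, and for
`λ ∈ C_{j,v}`, `λ' ∈ C_{i,v'}` with `j > i ≥ 0` the integral vanishes. -/
theorem stmt_17 {k : ℕ} (G : KGraph k) [Fintype G.V] [DecidableEq G.V]
    [DecidableEq G.P]
    (hfin : G.IsRowFinite) (hsc : G.StronglyConnected)
    [MeasurableSpace G.InfPath] (M : Measure G.InfPath) [IsProbabilityMeasure M]
    (hZmeas : ∀ l : G.P, MeasurableSet (G.Z l))
    (xL : G.V → ℝ) (hxpos : ∀ v, 0 < xL v) (hx1 : ∑ v, xL v = 1)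
    (ρ : Fin k → ℝ) (hρpos : ∀ i, 0 < ρ i)
    (heig : ∀ (i : Fin k) (v : G.V),
      ∑ w, (G.vertexMatrix i v w : ℝ) * xL w = ρ i * xL v)
    (hM : ∀ l : G.P,
      M (G.Z l) = ENNReal.ofReal ((∏ i, ρ i ^ (G.d l i))⁻¹ * xL (G.s l)))
    (c : G.V → ℕ → G.P → ℂ)
    (hsupp : ∀ v m l, c v m l ≠ 0 → G.d l = (fun _ => 1) ∧ G.r l = v)
    (hperp : ∀ v m, m < G.dv v - 1 →
      ∑ᶠ l : G.P, (starRingEnd ℂ) (c v m l) * G.wt ρ xL l = 0)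
    (honb : ∀ v m m', m < G.dv v - 1 → m' < G.dv v - 1 →
      ∑ᶠ l : G.P, (starRingEnd ℂ) (c v m l) * c v m' l * G.wt ρ xL l =
        if m = m' then 1 else 0) :
    (∀ (j : ℕ) (l l' : G.P) (m m' : ℕ),
      G.d l = (fun _ => j) → G.d l' = (fun _ => j) →
      m < G.dv (G.s l) - 1 → m' < G.dv (G.s l') - 1 →
      ∫ x, G.swavelet ρ l (c (G.s l) m) x *
          (starRingEnd ℂ) (G.swavelet ρ l' (c (G.s l') m') x) ∂M =
        if l = l' ∧ m = m' then 1 else 0) ∧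
    (∀ (i j : ℕ) (l l' : G.P) (m m' : ℕ), i < j →
      G.d l = (fun _ => j) → G.d l' = (fun _ => i) →
      m < G.dv (G.s l) - 1 → m' < G.dv (G.s l') - 1 →
      ∫ x, G.swavelet ρ l (c (G.s l) m) x *
          (starRingEnd ℂ) (G.swavelet ρ l' (c (G.s l') m') x) ∂M = 0) := by
  have hprodpos : ∀ n : Fin k → ℕ, (0:ℝ) < ∏ i, ρ i ^ n i :=
    fun n => Finset.prod_pos fun i _ => pow_pos (hρpos i) _
  set E : Finset G.P := (hfin (fun _ => 1)).toFinset with hE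
  -- conversion of the finsum hypotheses to sums over `E`
  have hconv : ∀ f : G.P → ℂ, (∀ μ, f μ ≠ 0 → G.d μ = (fun _ => 1)) →
      ∑ᶠ μ : G.P, f μ = ∑ μ ∈ E, f μ := by
    intro f hf
    refine finsum_eq_sum_of_support_subset f ?_
    intro μ hμ
    simp only [hE, Finset.coe_sort_coe, Set.Finite.coe_toFinset, Set.mem_setOf_eq]
    exact hf μ hμ
  have hwt_conj : ∀ μ : G.P, (starRingEnd ℂ) (G.wt ρ xL μ) = G.wt ρ xL μ :=
    fun μ => Complex.conj_ofReal _
  have hperpE : ∀ v m, m < G.dv v - 1 →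
      ∑ μ ∈ E, c v m μ * G.wt ρ xL μ = 0 := by
    intro v m hm
    have h0 := hperp v m hm
    rw [hconv _ (fun μ hμ => by
      by_contra hd
      have : c v m μ = 0 := by
        by_contra hc0; exact hd (hsupp v m μ hc0).1
      simp [this] at hμ)] at h0
    have := congrArg (starRingEnd ℂ) h0
    rw [map_sum, map_zero] at this
    rw [← this]
    refine Finset.sum_congr rfl fun μ _ => ?_
    rw [map_mul, Complex.conj_conj, hwt_conj]
  have honbE : ∀ v m m', m < G.dv v - 1 → m' < G.dv v - 1 →
      ∑ μ ∈ E, c v m μ * (starRingEnd ℂ) (c v m' μ) * G.wt ρ xL μ =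
        if m = m' then 1 else 0 := by
    intro v m m' hm hm'
    have h0 := honb v m m' hm hm'
    rw [hconv _ (fun μ hμ => by
      by_contra hd
      have : c v m μ = 0 := by
        by_contra hc0; exact hd (hsupp v m μ hc0).1
      simp [this] at hμ)] at h0
    have := congrArg (starRingEnd ℂ) h0
    rw [map_sum] at this
    have hrhs : (starRingEnd ℂ) (if m = m' then (1:ℂ) else 0) = if m = m' then 1 else 0 := by
      split <;> simp
    rw [hrhs] at this
    rw [← this]
    refine Finset.sum_congr rfl fun μ _ => ?_
    rw [map_mul, map_mul, Complex.conj_conj, hwt_conj]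
  -- measure of an elementary cylinder `Z(lμ)` for `μ ∈ D_{s(l)}`
  have hMcyl : ∀ (l μ : G.P) (h : G.s l = G.r μ), G.d μ = (fun _ => 1) →
      ((M (G.cyl l μ)).toReal : ℂ) =
        (((∏ i, ρ i ^ (G.d l i))⁻¹ : ℝ) : ℂ) * G.wt ρ xL μ := by
    intro l μ h hdμ
    have hcyl : G.cyl l μ = G.Z (G.comp l μ h) := by rw [KGraph.cyl, dif_pos h]
    rw [hcyl, hM, KGraph.wt]
    have hd : ∀ i, G.d (G.comp l μ h) i = G.d l i + 1 := by
      intro i; rw [G.d_comp]; simp [hdμ]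
    have hs : G.s (G.comp l μ h) = G.s μ := G.s_comp l μ h
    have hprod : (∏ i, ρ i ^ (G.d (G.comp l μ h) i)) =
        (∏ i, ρ i ^ (G.d l i)) * ∏ i, ρ i := by
      rw [← Finset.prod_mul_distrib]
      refine Finset.prod_congr rfl fun i _ => ?_
      rw [hd i, pow_succ]
    rw [hs, hprod, ENNReal.toReal_ofReal (mul_nonneg (inv_nonneg.mpr (mul_nonneg (hprodpos _).le (Finset.prod_pos (fun i _ => hρpos i)).le)) (hxpos _).le)]
    push_cast
    rw [mul_inv]
    ring
  constructor
  · -- equal degrees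
    intro j l l' m m' hl hl' hm hm'
    simp only [KGraph.swavelet_sum hfin ρ l (c (G.s l) m) (fun μ h => hsupp _ _ _ h),
      KGraph.swavelet_sum hfin ρ l' (c (G.s l') m') (fun μ h => hsupp _ _ _ h)]
    rw [KGraph.integral_pair M hZmeas ((hfin (fun _ => 1)).toFinset) _ _ _ _ l l']
    rw [← hE]
    by_cases hll : l = l'
    · subst hll
      have hAA : ((Real.sqrt (∏ i, ρ i ^ (G.d l i)) : ℝ) : ℂ) *
          ((Real.sqrt (∏ i, ρ i ^ (G.d l i)) : ℝ) : ℂ) =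
          (((∏ i, ρ i ^ (G.d l i)) : ℝ) : ℂ) := by
        rw [← Complex.ofReal_mul, Real.mul_self_sqrt (hprodpos _).le]
      rw [show (if (l = l ∧ m = m') then (1:ℂ) else 0) = if m = m' then 1 else 0 by simp]
      rw [← honbE (G.s l) m m' hm hm']
      refine Finset.sum_congr rfl fun μ hμ => ?_
      have hoff : ∀ μ' ∈ E, μ' ≠ μ →
          ((Real.sqrt (∏ i, ρ i ^ (G.d l i)) : ℝ) : ℂ) *
            ((Real.sqrt (∏ i, ρ i ^ (G.d l i)) : ℝ) : ℂ) * c (G.s l) m μ *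
            (starRingEnd ℂ) (c (G.s l) m' μ') *
            (((M (G.cyl l μ ∩ G.cyl l μ')).toReal : ℝ) : ℂ) = 0 := by
        intro μ' hμ' hne
        rcases eq_or_ne (c (G.s l) m μ) 0 with hc1 | hc1
        · simp [hc1]
        rcases eq_or_ne (c (G.s l) m' μ') 0 with hc2 | hc2
        · simp [hc2]
        have h1 : G.s l = G.r μ := ((hsupp _ _ _ hc1).2).symm
        have h2 : G.s l = G.r μ' := ((hsupp _ _ _ hc2).2).symm
        have hempty : G.cyl l μ ∩ G.cyl l μ' = ∅ := by
          rw [Set.eq_empty_iff_forall_notMem]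
          rintro x ⟨hx1, hx2⟩
          rw [KGraph.cyl, dif_pos h1] at hx1
          rw [KGraph.cyl, dif_pos h2] at hx2
          have heq := KGraph.eq_of_mem_Z hx1 hx2 (by
            rw [G.d_comp, G.d_comp, (hsupp _ _ _ hc1).1, (hsupp _ _ _ hc2).1])
          have hkey := KGraph.factor_unique (G := G)
            (show G.d (G.comp l μ h1) = G.d l + (fun _ => 1) by
              rw [G.d_comp, (hsupp _ _ _ hc1).1])
            h1 h2 rfl heq.symm rfl (hsupp _ _ _ hc1).1 rfl (hsupp _ _ _ hc2).1
          exact hne hkey.2.symm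
        simp [hempty]
      rw [Finset.sum_eq_single_of_mem μ hμ hoff]
      rcases eq_or_ne (c (G.s l) m μ) 0 with hc1 | hc1
      · simp [hc1]
      have h1 : G.s l = G.r μ := ((hsupp _ _ _ hc1).2).symm
      rw [Set.inter_self, hMcyl l μ h1 (hsupp _ _ _ hc1).1, hAA, Complex.ofReal_inv]
      have hPne : (((∏ i, ρ i ^ (G.d l i)) : ℝ) : ℂ) ≠ 0 := by
        exact_mod_cast (hprodpos (G.d l)).ne'
      linear_combination (c (G.s l) m μ * (starRingEnd ℂ) (c (G.s l) m' μ) *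
        G.wt ρ xL μ) * mul_inv_cancel₀ hPne
    · rw [if_neg (by tauto)]
      refine Finset.sum_eq_zero fun μ hμ => Finset.sum_eq_zero fun μ' hμ' => ?_
      rcases eq_or_ne (c (G.s l) m μ) 0 with hc1 | hc1
      · simp [hc1]
      rcases eq_or_ne (c (G.s l') m' μ') 0 with hc2 | hc2
      · simp [hc2]
      have h1 : G.s l = G.r μ := ((hsupp _ _ _ hc1).2).symm
      have h2 : G.s l' = G.r μ' := ((hsupp _ _ _ hc2).2).symm
      have hempty : G.cyl l μ ∩ G.cyl l' μ' = ∅ := by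
        rw [Set.eq_empty_iff_forall_notMem]
        rintro x ⟨hx1, hx2⟩
        rw [KGraph.cyl, dif_pos h1] at hx1
        rw [KGraph.cyl, dif_pos h2] at hx2
        have heq := KGraph.eq_of_mem_Z hx1 hx2 (by
          rw [G.d_comp, G.d_comp, (hsupp _ _ _ hc1).1, (hsupp _ _ _ hc2).1, hl, hl'])
        have hkey := KGraph.factor_unique (G := G)
          (show G.d (G.comp l μ h1) = (fun _ => j) + (fun _ => 1) by
            rw [G.d_comp, (hsupp _ _ _ hc1).1, hl])
          h1 h2 rfl heq.symm hl (hsupp _ _ _ hc1).1 hl' (hsupp _ _ _ hc2).1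
        exact hll hkey.1
      simp [hempty]
  · -- different degrees
    intro i j l l' m m' hij hl hl' hm hm'
    simp only [KGraph.swavelet_sum hfin ρ l (c (G.s l) m) (fun μ h => hsupp _ _ _ h),
      KGraph.swavelet_sum hfin ρ l' (c (G.s l') m') (fun μ h => hsupp _ _ _ h)]
    rw [KGraph.integral_pair M hZmeas ((hfin (fun _ => 1)).toFinset) _ _ _ _ l l']
    rw [← hE, Finset.sum_comm]
    refine Finset.sum_eq_zero fun μ' hμ' => ?_
    rcases eq_or_ne (c (G.s l') m' μ') 0 with hc2 | hc2
    · exact Finset.sum_eq_zero fun μ _ => by simp [hc2]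
    have h2 : G.s l' = G.r μ' := ((hsupp _ _ _ hc2).2).symm
    obtain ⟨⟨α, β⟩, ⟨hsαβ, hcαβ, hdα, hdβ⟩, -⟩ :=
      G.factor l (fun _ => i + 1) (fun _ => j - (i + 1))
        (by funext t; simp only [hl, Pi.add_apply]; omega)
    have hslβ : G.s l = G.s β := by rw [← hcαβ, G.s_comp]
    by_cases hαη : G.comp l' μ' h2 = α
    · have hterm : ∀ μ ∈ E,
          ((Real.sqrt (∏ i, ρ i ^ (G.d l i)) : ℝ) : ℂ) *
            ((Real.sqrt (∏ i, ρ i ^ (G.d l' i)) : ℝ) : ℂ) * c (G.s l) m μ *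
            (starRingEnd ℂ) (c (G.s l') m' μ') *
            (((M (G.cyl l μ ∩ G.cyl l' μ')).toReal : ℝ) : ℂ) =
          (((Real.sqrt (∏ i, ρ i ^ (G.d l i)) : ℝ) : ℂ) *
            ((Real.sqrt (∏ i, ρ i ^ (G.d l' i)) : ℝ) : ℂ) *
            (starRingEnd ℂ) (c (G.s l') m' μ') *
            (((∏ i, ρ i ^ (G.d l i))⁻¹ : ℝ) : ℂ)) *
            (c (G.s l) m μ * G.wt ρ xL μ) := by
        intro μ hμ
        rcases eq_or_ne (c (G.s l) m μ) 0 with hc1 | hc1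
        · simp [hc1]
        have h1 : G.s l = G.r μ := ((hsupp _ _ _ hc1).2).symm
        have hsβμ : G.s β = G.r μ := hslβ.symm.trans h1
        have hsαc : G.s α = G.r (G.comp β μ hsβμ) := hsαβ.trans (G.r_comp β μ hsβμ).symm
        have hccc : G.comp α (G.comp β μ hsβμ) hsαc = G.comp l μ h1 := by
          rw [← G.comp_assoc]
          exact KGraph.comp_congr hcαβ rfl _ _
        have hsub : G.Z (G.comp l μ h1) ⊆ G.Z (G.comp l' μ' h2) :=
          KGraph.Z_subset (by rw [hαη]; exact hsαc)
            ((KGraph.comp_congr hαη rfl _ hsαc).trans hccc)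
        have hinter : G.cyl l μ ∩ G.cyl l' μ' = G.cyl l μ := by
          rw [KGraph.cyl, KGraph.cyl, dif_pos h1, dif_pos h2]
          exact Set.inter_eq_left.mpr hsub
        rw [hinter, hMcyl l μ h1 (hsupp _ _ _ hc1).1]
        ring
      rw [Finset.sum_congr rfl hterm, ← Finset.mul_sum, hperpE (G.s l) m hm, mul_zero]
    · refine Finset.sum_eq_zero fun μ hμ => ?_
      rcases eq_or_ne (c (G.s l) m μ) 0 with hc1 | hc1
      · simp [hc1]
      have h1 : G.s l = G.r μ := ((hsupp _ _ _ hc1).2).symm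
      have hsβμ : G.s β = G.r μ := hslβ.symm.trans h1
      have hsαc : G.s α = G.r (G.comp β μ hsβμ) := hsαβ.trans (G.r_comp β μ hsβμ).symm
      have hccc : G.comp α (G.comp β μ hsβμ) hsαc = G.comp l μ h1 := by
        rw [← G.comp_assoc]
        exact KGraph.comp_congr hcαβ rfl _ _
      have hdαη : G.d (G.comp l' μ' h2) = G.d α := by
        rw [G.d_comp, hl', (hsupp _ _ _ hc2).1, hdα]
        funext t; simp
      have hempty : G.cyl l μ ∩ G.cyl l' μ' = ∅ := by
        rw [Set.eq_empty_iff_forall_notMem]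
        rintro x ⟨hx1, hx2⟩
        rw [KGraph.cyl, dif_pos h1] at hx1
        rw [KGraph.cyl, dif_pos h2] at hx2
        have hxα : x ∈ G.Z α := KGraph.Z_subset hsαc hccc hx1
        exact hαη (KGraph.eq_of_mem_Z hx2 hxα hdαη)
      simp [hempty]
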